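/- arXiv:2307.01986 — 2 statements merged into one kernel-verified Lean document; each statement's English description precedes it below -/
import Mathlib

section
/- Verification of the power-utility ansatz for the equilibrium HJB equation: Let T > 0, r > 0, μ > r, σ > 0 and β, γ ∈ (0,1). Let v, w, z : ∇[0,T] → (0,∞) be continuous, g¹, g² : [0,T] → (0,∞), and set k(t,s) = rβ − (μ−r)²β/(2σ²(β−1)) − w(t,s). Suppose φ¹, φ² : ∇[0,T] → (0,∞) are differentiable in s and satisfy, for all 0 ≤ t ≤ s ≤ T, the ODE system ∂φ¹/∂s(t,s) + [k(t,s) − β(φ¹(s,s)/v(s,s))^{1/(β−1)}]φ¹(t,s) + v(t,s)(φ¹(s,s)/v(s,s))^{β/(β−1)} = 0 and ∂φ²/∂s(t,s) − w(t,s)φ²(t,s) + z(t,s) = 0, with φ¹(t,T) = g¹(t), φ²(t,T) = g²(t). Define u(t,s,x,y) = φ¹(t,s)y^β + φ²(t,s)x^γ for 0 ≤ t ≤ s ≤ T and x, y ∈ (0,∞). Then u satisfies the equilibrium HJB equation: u_s(t,s,x,y) + [ (μ−r)² (u_y(s,s,y,y))² / (2σ² (u_{yy}(s,s,y,y))²)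 ] u_{yy}(t,s,x,y) + [ r y − (μ−r)² u_y(s,s,y,y)/(σ² u_{yy}(s,s,y,y)) − ( u_y(s,s,y,y)/(β v(s,s)) )^{1/(β−1)} ] u_y(t,s,x,y) + v(t,s) ( u_y(s,s,y,y)/(β v(s,s)) )^{β/(β−1)} − w(t,s) u(t,s,x,y) + z(t,s) x^γ = 0 for all 0 ≤ t ≤ s ≤ T and x, y ∈ (0,∞), together with the terminal condition u(t,T,x,y) = g¹(t)y^β + g²(t)x^γ. -/
open Set

noncomputable section

/-- First partial derivative of `u(t,s,x,y)` in the (one-dimensional) spatial variable `y`. -/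
def Dy (u : ℝ → ℝ → ℝ → ℝ → ℝ) (t s x y : ℝ) : ℝ := deriv (fun y' => u t s x y') y

/-- Second partial derivative of `u(t,s,x,y)` in `y`. -/
def Dyy (u : ℝ → ℝ → ℝ → ℝ → ℝ) (t s x y : ℝ) : ℝ := deriv (fun y' => Dy u t s x y') y

lemma Dy_eq (φ1 φ2 : ℝ → ℝ → ℝ) (β γ t s x : ℝ) {y : ℝ} (hy : 0 < y) :
    Dy (fun t s x y => φ1 t s * y ^ β + φ2 t s * x ^ γ) t s x y
      = φ1 t s * (β * y ^ (β - 1)) := by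
  unfold Dy
  exact (((Real.hasDerivAt_rpow_const (Or.inl hy.ne')).const_mul (φ1 t s)).add_const
    (φ2 t s * x ^ γ)).deriv

lemma Dyy_eq (φ1 φ2 : ℝ → ℝ → ℝ) (β γ t s x : ℝ) {y : ℝ} (hy : 0 < y) :
    Dyy (fun t s x y => φ1 t s * y ^ β + φ2 t s * x ^ γ) t s x y
      = φ1 t s * (β * ((β - 1) * y ^ (β - 2))) := by
  unfold Dyy
  have hev : (fun y' => Dy (fun t s x y => φ1 t s * y ^ β + φ2 t s * x ^ γ) t s x y')
      =ᶠ[nhds y] fun y' => φ1 t s * (β * y' ^ (β - 1)) := by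
    filter_upwards [eventually_gt_nhds hy] with y' hy' using Dy_eq φ1 φ2 β γ t s x hy'
  rw [hev.deriv_eq]
  have h2 : β - 2 = β - 1 - 1 := by ring
  rw [h2]
  exact (((Real.hasDerivAt_rpow_const (Or.inl hy.ne')).const_mul β).const_mul (φ1 t s)).deriv

/-- **Verification of the power-utility ansatz for the equilibrium HJB equation.** -/
theorem power_utility_ansatz_verification
    {T r mu sig β γ : ℝ} (hT : 0 < T) (hr : 0 < r) (hmu : r < mu) (hsig : 0 < sig)
    (hβ : β ∈ Ioo (0 : ℝ) 1) (hγ : γ ∈ Ioo (0 : ℝ) 1)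
    (v w z : ℝ → ℝ → ℝ) (g1 g2 : ℝ → ℝ)
    (hvpos : ∀ t s : ℝ, 0 ≤ t → t ≤ s → s ≤ T → 0 < v t s)
    (hwpos : ∀ t s : ℝ, 0 ≤ t → t ≤ s → s ≤ T → 0 < w t s)
    (hzpos : ∀ t s : ℝ, 0 ≤ t → t ≤ s → s ≤ T → 0 < z t s)
    (hvc : ContinuousOn (fun p : ℝ × ℝ => v p.1 p.2)
      {p : ℝ × ℝ | 0 ≤ p.1 ∧ p.1 ≤ p.2 ∧ p.2 ≤ T})
    (hg1pos : ∀ t ∈ Icc (0 : ℝ) T, 0 < g1 t) (hg2pos : ∀ t ∈ Icc (0 : ℝ) T, 0 < g2 t)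
    (φ1 φ2 φ1' φ2' : ℝ → ℝ → ℝ)
    (hφpos : ∀ t s : ℝ, 0 ≤ t → t ≤ s → s ≤ T → 0 < φ1 t s ∧ 0 < φ2 t s)
    (hφderiv : ∀ t s : ℝ, 0 ≤ t → t ≤ s → s ≤ T →
      HasDerivWithinAt (fun s' => φ1 t s') (φ1' t s) (Icc t T) s ∧
      HasDerivWithinAt (fun s' => φ2 t s') (φ2' t s) (Icc t T) s)
    (hODE1 : ∀ t s : ℝ, 0 ≤ t → t ≤ s → s ≤ T →
      φ1' t s
          + ((r * β - (mu - r) ^ 2 * β / (2 * sig ^ 2 * (β - 1)) - w t s)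
              - β * (φ1 s s / v s s) ^ ((1 : ℝ) / (β - 1))) * φ1 t s
          + v t s * (φ1 s s / v s s) ^ (β / (β - 1)) = 0)
    (hODE2 : ∀ t s : ℝ, 0 ≤ t → t ≤ s → s ≤ T →
      φ2' t s - w t s * φ2 t s + z t s = 0)
    (hterm : ∀ t ∈ Icc (0 : ℝ) T, φ1 t T = g1 t ∧ φ2 t T = g2 t) :
    ∀ t s x y : ℝ, 0 ≤ t → t ≤ s → s ≤ T → 0 < x → 0 < y →
      (HasDerivWithinAt (fun s' => φ1 t s' * y ^ β + φ2 t s' * x ^ γ)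
        (-(((mu - r) ^ 2
              * (Dy (fun t s x y => φ1 t s * y ^ β + φ2 t s * x ^ γ) s s y y) ^ 2
              / (2 * sig ^ 2
                * (Dyy (fun t s x y => φ1 t s * y ^ β + φ2 t s * x ^ γ) s s y y) ^ 2))
            * Dyy (fun t s x y => φ1 t s * y ^ β + φ2 t s * x ^ γ) t s x y
          + (r * y
              - (mu - r) ^ 2 * Dy (fun t s x y => φ1 t s * y ^ β + φ2 t s * x ^ γ) s s y y
                / (sig ^ 2 * Dyy (fun t s x y => φ1 t s * y ^ β + φ2 t s * x ^ γ) s s y y)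
              - (Dy (fun t s x y => φ1 t s * y ^ β + φ2 t s * x ^ γ) s s y y / (β * v s s))
                  ^ ((1 : ℝ) / (β - 1)))
            * Dy (fun t s x y => φ1 t s * y ^ β + φ2 t s * x ^ γ) t s x y
          + v t s
            * (Dy (fun t s x y => φ1 t s * y ^ β + φ2 t s * x ^ γ) s s y y / (β * v s s))
                ^ (β / (β - 1))
          - w t s * (φ1 t s * y ^ β + φ2 t s * x ^ γ) + z t s * x ^ γ))
        (Icc t T) s) ∧
      φ1 t T * y ^ β + φ2 t T * x ^ γ = g1 t * y ^ β + g2 t * x ^ γ := by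
  intro t s x y ht hts hsT hx hy
  have hs0 : 0 ≤ s := ht.trans hts
  have hva : 0 < v s s := hvpos s s hs0 le_rfl hsT
  have hvt : 0 < v t s := hvpos t s ht hts hsT
  have ha : 0 < φ1 s s := (hφpos s s hs0 le_rfl hsT).1
  have hβ0 : β ≠ 0 := ne_of_gt hβ.1
  have hβ1 : β - 1 ≠ 0 := by have := hβ.2; intro h; linarith [sub_eq_zero.mp h]
  have hsig0 : sig ≠ 0 := hsig.ne'
  have hc : 0 < y ^ (β - 2) := Real.rpow_pos_of_pos hy _
  refine ⟨?_, ?_⟩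
  · rw [Dy_eq φ1 φ2 β γ s s y hy, Dyy_eq φ1 φ2 β γ s s y hy,
        Dy_eq φ1 φ2 β γ t s x hy, Dyy_eq φ1 φ2 β γ t s x hy]
    have H := ((hφderiv t s ht hts hsT).1.mul_const (y ^ β)).add
      ((hφderiv t s ht hts hsT).2.mul_const (x ^ γ))
    convert H using 1
    case e'_4 => rfl
    case e'_5 => rfl
    case e'_8 => rfl
    have hb : φ1 s s * (β * y ^ (β - 1)) / (β * v s s) = φ1 s s / v s s * y ^ (β - 1) := by
      field_simp
    have hq1 : (φ1 s s * (β * y ^ (β - 1)) / (β * v s s)) ^ ((1 : ℝ) / (β - 1))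
        = (φ1 s s / v s s) ^ ((1 : ℝ) / (β - 1)) * y := by
      rw [hb, Real.mul_rpow (div_nonneg ha.le hva.le) (Real.rpow_nonneg hy.le _),
        ← Real.rpow_mul hy.le, show (β - 1) * ((1 : ℝ) / (β - 1)) = 1 by field_simp,
        Real.rpow_one]
    have hq2 : (φ1 s s * (β * y ^ (β - 1)) / (β * v s s)) ^ (β / (β - 1))
        = (φ1 s s / v s s) ^ (β / (β - 1)) * y ^ β := by
      rw [hb, Real.mul_rpow (div_nonneg ha.le hva.le) (Real.rpow_nonneg hy.le _),
        ← Real.rpow_mul hy.le, mul_div_cancel₀ _ hβ1]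
    rw [hq1, hq2]
    have hy1 : y ^ (β - 1) = y ^ (β - 2) * y := by
      rw [show β - 1 = β - 2 + 1 by ring, Real.rpow_add_one hy.ne']
    have hy2 : y ^ β = y ^ (β - 2) * (y * y) := by
      have h := Real.rpow_add hy (β - 2) 2
      rw [show β - 2 + 2 = β by ring] at h
      rw [h, show (2:ℝ) = ((2:ℕ):ℝ) by norm_num, Real.rpow_natCast]
      ring
    rw [hy1, hy2]
    have h1 := hODE1 t s ht hts hsT
    have h2 := hODE2 t s ht hts hsT
    have e1 : φ1' t s
        = -(((r * β - (mu - r) ^ 2 * β / (2 * sig ^ 2 * (β - 1)) - w t s)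
              - β * (φ1 s s / v s s) ^ ((1 : ℝ) / (β - 1))) * φ1 t s
            + v t s * (φ1 s s / v s s) ^ (β / (β - 1))) := by linarith
    have e2 : φ2' t s = w t s * φ2 t s - z t s := by linarith
    rw [e1, e2]
    field_simp
    ring
  · rw [(hterm t ⟨ht, hts.trans hsT⟩).1, (hterm t ⟨ht, hts.trans hsT⟩).2]
end
end

section
/- Two-sided bounds for the nonlinear integral equation of the financial example: Let T > 0 and β ∈ (0,1). Let φ̄ : [0,T] → (0,∞) be continuous, let k : {(s,τ) : 0 ≤ s ≤ τ ≤ T} → ℝ, ḡ : [0,T] → (0,∞) and v̄ : {(s,λ) : 0 ≤ s ≤ λ ≤ T} → (0,∞) be continuous, and suppose that for all s ∈ [0,T]: φ̄(s) = exp{ ∫_s^T [k(s,τ) − β φ̄(τ)^{1/(β−1)}] dτ } ḡ(s) + ∫_s^T exp{ ∫_s^λ [k(s,τ) − β φ̄(τ)^{1/(β−1)}] dτ } v̄(s,λ) φ̄(λ)^{β/(β−1)} dλ. Assume there exist constants g₀ > 0 and ϱ > 0 such that ḡ(s) exp{∫_s^T k(s,τ) dτ} ≥ g₀ for all s ∈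 [0,T] and v̄(s,λ) exp{∫_s^λ k(s,τ) dτ} ≥ exp{−ϱ(λ−s)} for all 0 ≤ s ≤ λ ≤ T. Then φ̄(s) ≥ exp{−ϱ(T−s)} g₀ for all s ∈ [0,T]; consequently, with δ₀ := exp{−ϱT} g₀ > 0, one also has φ̄(s) ≤ exp{∫_s^T k(s,τ) dτ} ḡ(s) + δ₀^{β/(β−1)} ∫_s^T exp{∫_s^λ k(s,τ) dτ} v̄(s,λ) dλ for all s ∈ [0,T]. -/
open Set intervalIntegral

noncomputable section

/-- Continuity of the primitive of a continuous function. -/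
lemma myaux_cont_primitive {c : ℝ → ℝ} (hc : Continuous c) (a : ℝ) :
    Continuous fun x => ∫ t in a..x, c t := by
  refine continuous_iff_continuousAt.mpr fun x => ?_
  exact (intervalIntegral.integral_hasDerivAt_right (hc.intervalIntegrable a x)
    hc.stronglyMeasurable.stronglyMeasurableAtFilter hc.continuousAt).continuousAt

/-- FTC computation: `∫_a^b c(x) e^{-∫_a^x c} dx = 1 - e^{-∫_a^b c}`. -/
lemma myaux_ftc_exp {c : ℝ → ℝ} (hc : Continuous c) (a b : ℝ) :
    (∫ x in a..b, c x * Real.exp (-∫ t in a..x, c t))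
      = 1 - Real.exp (-∫ t in a..b, c t) := by
  have hI : ∀ x : ℝ, HasDerivAt (fun y => ∫ t in a..y, c t) (c x) x := fun x =>
    intervalIntegral.integral_hasDerivAt_right (hc.intervalIntegrable a x)
      hc.stronglyMeasurable.stronglyMeasurableAtFilter hc.continuousAt
  have hF : ∀ x : ℝ, HasDerivAt (fun y => -Real.exp (-∫ t in a..y, c t))
      (c x * Real.exp (-∫ t in a..x, c t)) x := by
    intro x
    have h1 := (((hI x).neg).exp).neg
    exact h1.congr_deriv (by simp only [Pi.neg_apply]; ring)
  have hcont : Continuous fun x => c x * Real.exp (-∫ t in a..x, c t) :=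
    hc.mul (Real.continuous_exp.comp (myaux_cont_primitive hc a).neg)
  rw [intervalIntegral.integral_eq_sub_of_hasDerivAt (fun x _ => hF x)
    (hcont.intervalIntegrable a b)]
  simp
  ring

/-- **Two-sided bounds for the nonlinear integral equation of the financial example:**
if `φ̄` is a continuous positive solution of
`φ̄(s) = exp{∫_s^T [k(s,τ) − β φ̄(τ)^{1/(β−1)}] dτ} ḡ(s)
  + ∫_s^T exp{∫_s^λ [k(s,τ) − β φ̄(τ)^{1/(β−1)}] dτ} v̄(s,λ) φ̄(λ)^{β/(β−1)} dλ`
and `ḡ(s) exp{∫_s^T k(s,τ)dτ} ≥ g₀ > 0`,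
`v̄(s,λ) exp{∫_s^λ k(s,τ)dτ} ≥ exp{−ϱ(λ−s)}`, then
`φ̄(s) ≥ exp{−ϱ(T−s)} g₀`, and with `δ₀ = exp{−ϱT} g₀` also
`φ̄(s) ≤ exp{∫_s^T k(s,τ)dτ} ḡ(s) + δ₀^{β/(β−1)} ∫_s^T exp{∫_s^λ k(s,τ)dτ} v̄(s,λ) dλ`. -/
theorem integral_equation_two_sided_bounds
    {T β : ℝ} (hT : 0 < T) (hβ : β ∈ Ioo (0 : ℝ) 1)
    (φ : ℝ → ℝ) (k : ℝ → ℝ → ℝ) (g : ℝ → ℝ) (v : ℝ → ℝ → ℝ)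
    (hφc : ContinuousOn φ (Icc 0 T)) (hφpos : ∀ s ∈ Icc (0 : ℝ) T, 0 < φ s)
    (hkc : ContinuousOn (fun p : ℝ × ℝ => k p.1 p.2)
      {p : ℝ × ℝ | 0 ≤ p.1 ∧ p.1 ≤ p.2 ∧ p.2 ≤ T})
    (hgc : ContinuousOn g (Icc 0 T)) (hgpos : ∀ s ∈ Icc (0 : ℝ) T, 0 < g s)
    (hvc : ContinuousOn (fun p : ℝ × ℝ => v p.1 p.2)
      {p : ℝ × ℝ | 0 ≤ p.1 ∧ p.1 ≤ p.2 ∧ p.2 ≤ T})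
    (hvpos : ∀ s lam : ℝ, 0 ≤ s → s ≤ lam → lam ≤ T → 0 < v s lam)
    (heq : ∀ s ∈ Icc (0 : ℝ) T,
      φ s = Real.exp (∫ τ in s..T, k s τ - β * φ τ ^ ((1 : ℝ) / (β - 1))) * g s
        + ∫ lam in s..T,
            Real.exp (∫ τ in s..lam, k s τ - β * φ τ ^ ((1 : ℝ) / (β - 1)))
              * v s lam * φ lam ^ (β / (β - 1)))
    (g0 ϱ : ℝ) (hg0 : 0 < g0) (hϱ : 0 < ϱ)
    (hglb : ∀ s ∈ Icc (0 : ℝ) T, g0 ≤ g s * Real.exp (∫ τ in s..T, k s τ))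
    (hvlb : ∀ s lam : ℝ, 0 ≤ s → s ≤ lam → lam ≤ T →
      Real.exp (-ϱ * (lam - s)) ≤ v s lam * Real.exp (∫ τ in s..lam, k s τ)) :
    (∀ s ∈ Icc (0 : ℝ) T, Real.exp (-ϱ * (T - s)) * g0 ≤ φ s) ∧
    (∀ s ∈ Icc (0 : ℝ) T,
      φ s ≤ Real.exp (∫ τ in s..T, k s τ) * g s
        + (Real.exp (-ϱ * T) * g0) ^ (β / (β - 1))
            * ∫ lam in s..T, Real.exp (∫ τ in s..lam, k s τ) * v s lam) := by
  obtain ⟨hβ0, hβ1⟩ := hβ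
  have hβ1' : β - 1 < 0 := by linarith
  have hβne : β - 1 ≠ 0 := ne_of_lt hβ1'
  -- clamping map onto [0,T]
  have hclc : Continuous fun x : ℝ => max 0 (min x T) :=
    continuous_const.max (continuous_id.min continuous_const)
  have hclmem : ∀ x : ℝ, max 0 (min x T) ∈ Icc (0 : ℝ) T := fun x =>
    ⟨le_max_left _ _, max_le hT.le (min_le_right _ _)⟩
  have hcleq : ∀ x ∈ Icc (0 : ℝ) T, max 0 (min x T) = x := by
    intro x hx
    rw [min_eq_left hx.2, max_eq_right hx.1]
  -- global continuous extension of φ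
  set φ' : ℝ → ℝ := fun x => φ (max 0 (min x T)) with hφ'def
  have hφ'c : Continuous φ' := hφc.comp_continuous hclc hclmem
  have hφ'eq : ∀ x ∈ Icc (0 : ℝ) T, φ' x = φ x := by
    intro x hx; simp only [φ', hcleq x hx]
  have hφ'pos : ∀ x, 0 < φ' x := fun x => hφpos _ (hclmem x)
  -- the consumption function
  set c : ℝ → ℝ := fun τ => β * φ' τ ^ ((1 : ℝ) / (β - 1)) with hcdef
  have hcc : Continuous c :=
    continuous_const.mul (hφ'c.rpow_const fun x => Or.inl (hφ'pos x).ne')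
  have hcpos : ∀ τ, 0 < c τ :=
    fun τ => mul_pos hβ0 (Real.rpow_pos_of_pos (hφ'pos τ) _)
  -- clamped slices of k and v
  set k2 : ℝ → ℝ → ℝ := fun s τ => k s (max s (min τ T)) with hk2def
  set v2 : ℝ → ℝ → ℝ := fun s lam => v s (max s (min lam T)) with hv2def
  have hclmem2 : ∀ s ∈ Icc (0 : ℝ) T, ∀ τ : ℝ,
      (s, max s (min τ T)) ∈ {p : ℝ × ℝ | 0 ≤ p.1 ∧ p.1 ≤ p.2 ∧ p.2 ≤ T} := by
    intro s hs τ
    exact ⟨hs.1, le_max_left _ _, max_le hs.2 (min_le_right _ _)⟩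
  have hclc2 : ∀ s : ℝ, Continuous fun τ : ℝ => (s, max s (min τ T)) :=
    fun s => continuous_const.prodMk (continuous_const.max (continuous_id.min continuous_const))
  have hk2c : ∀ s ∈ Icc (0 : ℝ) T, Continuous fun τ => k2 s τ := by
    intro s hs
    exact hkc.comp_continuous (hclc2 s) (hclmem2 s hs)
  have hv2c : ∀ s ∈ Icc (0 : ℝ) T, Continuous fun lam => v2 s lam := by
    intro s hs
    exact hvc.comp_continuous (hclc2 s) (hclmem2 s hs)
  have hcleq2 : ∀ s : ℝ, ∀ τ ∈ Icc s T, max s (min τ T) = τ := by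
    intro s τ hτ; rw [min_eq_left hτ.2, max_eq_right hτ.1]
  have hk2eq : ∀ s : ℝ, ∀ τ ∈ Icc s T, k2 s τ = k s τ := by
    intro s τ hτ; simp only [k2, hcleq2 s τ hτ]
  have hv2eq : ∀ s : ℝ, ∀ lam ∈ Icc s T, v2 s lam = v s lam := by
    intro s lam hlam; simp only [v2, hcleq2 s lam hlam]
  have hv2pos : ∀ s ∈ Icc (0 : ℝ) T, ∀ lam : ℝ, 0 < v2 s lam := by
    intro s hs lam
    exact hvpos s _ hs.1 (le_max_left _ _) (max_le hs.2 (min_le_right _ _))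
  -- rewriting the k-integrals
  have hKcongr : ∀ s ∈ Icc (0 : ℝ) T, ∀ b ∈ Icc s T,
      (∫ τ in s..b, k s τ) = ∫ τ in s..b, k2 s τ := by
    intro s hs b hb
    apply intervalIntegral.integral_congr
    intro τ hτ
    rw [uIcc_of_le hb.1] at hτ
    exact (hk2eq s τ ⟨hτ.1, hτ.2.trans hb.2⟩).symm
  -- rewriting the combined integrals
  have hIcongr : ∀ s ∈ Icc (0 : ℝ) T, ∀ b ∈ Icc s T,
      (∫ τ in s..b, k s τ - β * φ τ ^ ((1 : ℝ) / (β - 1)))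
        = (∫ τ in s..b, k2 s τ) - ∫ τ in s..b, c τ := by
    intro s hs b hb
    rw [← intervalIntegral.integral_sub ((hk2c s hs).intervalIntegrable s b)
        (hcc.intervalIntegrable s b)]
    apply intervalIntegral.integral_congr
    intro τ hτ
    rw [uIcc_of_le hb.1] at hτ
    have hτ0T : τ ∈ Icc (0 : ℝ) T := ⟨hs.1.trans hτ.1, hτ.2.trans hb.2⟩
    show k s τ - β * φ τ ^ ((1 : ℝ) / (β - 1)) = k2 s τ - c τ
    rw [hk2eq s τ ⟨hτ.1, hτ.2.trans hb.2⟩]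
    simp only [c, hφ'eq τ hτ0T]
  -- the rewritten fixed point equation
  have key : ∀ s ∈ Icc (0 : ℝ) T,
      φ s = Real.exp ((∫ τ in s..T, k2 s τ) - ∫ τ in s..T, c τ) * g s
        + ∫ lam in s..T,
            Real.exp ((∫ τ in s..lam, k2 s τ) - ∫ τ in s..lam, c τ)
              * v2 s lam * φ lam ^ (β / (β - 1)) := by
    intro s hs
    rw [heq s hs, hIcongr s hs T ⟨hs.2, le_refl T⟩]
    congr 1
    apply intervalIntegral.integral_congr
    intro lam hlam
    rw [uIcc_of_le hs.2] at hlam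
    show Real.exp (∫ τ in s..lam, k s τ - β * φ τ ^ ((1 : ℝ) / (β - 1)))
          * v s lam * φ lam ^ (β / (β - 1))
        = Real.exp ((∫ τ in s..lam, k2 s τ) - ∫ τ in s..lam, c τ)
          * v2 s lam * φ lam ^ (β / (β - 1))
    rw [hIcongr s hs lam hlam, hv2eq s lam hlam]
  -- rpow decomposition
  have hrpow : ∀ lam ∈ Icc (0 : ℝ) T,
      φ lam ^ (β / (β - 1)) = (c lam / β) * φ lam := by
    intro lam hlam
    have hpos := hφpos lam hlam
    have hqe : β / (β - 1) = (1 : ℝ) / (β - 1) + 1 := by field_simp; ring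
    rw [hqe, Real.rpow_add hpos, Real.rpow_one]
    simp only [c, hφ'eq lam hlam]
    field_simp
  -- continuity of the rewritten outer integrand on [s,T]
  have hUcont : ∀ s ∈ Icc (0 : ℝ) T, ContinuousOn
      (fun lam => Real.exp ((∫ τ in s..lam, k2 s τ) - ∫ τ in s..lam, c τ)
        * v2 s lam * φ lam ^ (β / (β - 1))) (Icc s T) := by
    intro s hs
    have h1 : Continuous fun lam =>
        Real.exp ((∫ τ in s..lam, k2 s τ) - ∫ τ in s..lam, c τ) * v2 s lam :=
      (Real.continuous_exp.comp
        ((myaux_cont_primitive (hk2c s hs) s).sub (myaux_cont_primitive hcc s))).mul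
        (hv2c s hs)
    have h2 : ContinuousOn (fun lam => φ lam ^ (β / (β - 1))) (Icc s T) := by
      apply ContinuousOn.rpow_const (hφc.mono (Icc_subset_Icc hs.1 le_rfl))
      intro x hx
      exact Or.inl (hφpos x ⟨hs.1.trans hx.1, hx.2⟩).ne'
    exact h1.continuousOn.mul h2
  -- Part 1: lower bound
  have part1 : ∀ s ∈ Icc (0 : ℝ) T, Real.exp (-ϱ * (T - s)) * g0 ≤ φ s := by
    have hψc : ContinuousOn (fun x => φ x * Real.exp (ϱ * (T - x))) (Icc 0 T) :=
      hφc.mul (Real.continuous_exp.comp (by fun_prop)).continuousOn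
    obtain ⟨s₀, hs₀, hmin⟩ := isCompact_Icc.exists_isMinOn (nonempty_Icc.mpr hT.le) hψc
    set m : ℝ := φ s₀ * Real.exp (ϱ * (T - s₀)) with hmdef
    have hmin' : ∀ x ∈ Icc (0 : ℝ) T, m ≤ φ x * Real.exp (ϱ * (T - x)) :=
      fun x hx => isMinOn_iff.mp hmin x hx
    have hmpos : 0 < m := mul_pos (hφpos _ hs₀) (Real.exp_pos _)
    -- it suffices that g0 ≤ m
    suffices hg0m : g0 ≤ m by
      intro s hs
      have h1 := hmin' s hs
      have h2 : g0 ≤ φ s * Real.exp (ϱ * (T - s)) := hg0m.trans h1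
      have h3 := mul_le_mul_of_nonneg_right h2 (Real.exp_pos (-ϱ * (T - s))).le
      calc Real.exp (-ϱ * (T - s)) * g0 = g0 * Real.exp (-ϱ * (T - s)) := by ring
        _ ≤ φ s * Real.exp (ϱ * (T - s)) * Real.exp (-ϱ * (T - s)) := h3
        _ = φ s := by rw [mul_assoc, ← Real.exp_add]; ring_nf; rw [Real.exp_zero, mul_one]
    by_contra hcon
    push_neg at hcon
    -- notation at the minimum point
    have hφs₀ : φ s₀ = m * Real.exp (-ϱ * (T - s₀)) := by
      rw [hmdef, mul_assoc, ← Real.exp_add]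
      ring_nf
      rw [Real.exp_zero, mul_one]
    have hφlb : ∀ lam ∈ Icc s₀ T, m * Real.exp (-ϱ * (T - lam)) ≤ φ lam := by
      intro lam hlam
      have h1 := hmin' lam ⟨hs₀.1.trans hlam.1, hlam.2⟩
      have h3 := mul_le_mul_of_nonneg_right h1 (Real.exp_pos (-ϱ * (T - lam))).le
      calc m * Real.exp (-ϱ * (T - lam))
          ≤ φ lam * Real.exp (ϱ * (T - lam)) * Real.exp (-ϱ * (T - lam)) := h3
        _ = φ lam := by rw [mul_assoc, ← Real.exp_add]; ring_nf; rw [Real.exp_zero, mul_one]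
    -- term 1 lower bound
    have hterm1 : g0 * Real.exp (-(∫ τ in s₀..T, c τ))
        ≤ Real.exp ((∫ τ in s₀..T, k2 s₀ τ) - ∫ τ in s₀..T, c τ) * g s₀ := by
      have h1 := hglb s₀ hs₀
      rw [hKcongr s₀ hs₀ T ⟨hs₀.2, le_refl T⟩] at h1
      calc g0 * Real.exp (-(∫ τ in s₀..T, c τ))
          ≤ (g s₀ * Real.exp (∫ τ in s₀..T, k2 s₀ τ)) * Real.exp (-(∫ τ in s₀..T, c τ)) :=
            mul_le_mul_of_nonneg_right h1 (Real.exp_pos _).le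
        _ = Real.exp ((∫ τ in s₀..T, k2 s₀ τ) - ∫ τ in s₀..T, c τ) * g s₀ := by
            rw [sub_eq_add_neg, Real.exp_add]; ring
    -- term 2 lower bound
    have hterm2 : (m * Real.exp (-ϱ * (T - s₀)) / β) * (1 - Real.exp (-(∫ τ in s₀..T, c τ)))
        ≤ ∫ lam in s₀..T,
            Real.exp ((∫ τ in s₀..lam, k2 s₀ τ) - ∫ τ in s₀..lam, c τ)
              * v2 s₀ lam * φ lam ^ (β / (β - 1)) := by
      have hLc : Continuous fun lam =>
          (m * Real.exp (-ϱ * (T - s₀)) / β) * (c lam * Real.exp (-(∫ τ in s₀..lam, c τ))) :=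
        continuous_const.mul (hcc.mul
          (Real.continuous_exp.comp (myaux_cont_primitive hcc s₀).neg))
      have hUint : IntervalIntegrable (fun lam =>
          Real.exp ((∫ τ in s₀..lam, k2 s₀ τ) - ∫ τ in s₀..lam, c τ)
            * v2 s₀ lam * φ lam ^ (β / (β - 1))) MeasureTheory.volume s₀ T := by
        apply ContinuousOn.intervalIntegrable
        rw [uIcc_of_le hs₀.2]
        exact hUcont s₀ hs₀
      have hmono := intervalIntegral.integral_mono_on hs₀.2
        (hLc.intervalIntegrable s₀ T)
        hUint
        (by
          intro lam hlam
          have hlam0T : lam ∈ Icc (0 : ℝ) T := ⟨hs₀.1.trans hlam.1, hlam.2⟩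
          have hv : Real.exp (-ϱ * (lam - s₀))
              ≤ v2 s₀ lam * Real.exp (∫ τ in s₀..lam, k2 s₀ τ) := by
            have h1 := hvlb s₀ lam hs₀.1 hlam.1 hlam.2
            rw [hKcongr s₀ hs₀ lam hlam, ← hv2eq s₀ lam hlam] at h1
            exact h1
          calc (m * Real.exp (-ϱ * (T - s₀)) / β)
                * (c lam * Real.exp (-(∫ τ in s₀..lam, c τ)))
              = (Real.exp (-ϱ * (lam - s₀)) * Real.exp (-(∫ τ in s₀..lam, c τ)))
                * ((c lam / β) * (m * Real.exp (-ϱ * (T - lam)))) := by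
                rw [show (-ϱ * (T - s₀)) = (-ϱ * (lam - s₀)) + (-ϱ * (T - lam)) by ring,
                  Real.exp_add]
                ring
            _ ≤ ((v2 s₀ lam * Real.exp (∫ τ in s₀..lam, k2 s₀ τ))
                  * Real.exp (-(∫ τ in s₀..lam, c τ)))
                * ((c lam / β) * φ lam) := by
                apply mul_le_mul
                · exact mul_le_mul_of_nonneg_right hv (Real.exp_pos _).le
                · exact mul_le_mul_of_nonneg_left (hφlb lam hlam)
                    (div_nonneg (hcpos lam).le hβ0.le)
                · exact mul_nonneg (div_nonneg (hcpos lam).le hβ0.le)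
                    (mul_nonneg hmpos.le (Real.exp_pos _).le)
                · exact mul_nonneg (mul_nonneg (hv2pos s₀ hs₀ lam).le (Real.exp_pos _).le)
                    (Real.exp_pos _).le
            _ = Real.exp ((∫ τ in s₀..lam, k2 s₀ τ) - ∫ τ in s₀..lam, c τ)
                * v2 s₀ lam * φ lam ^ (β / (β - 1)) := by
                rw [hrpow lam hlam0T, sub_eq_add_neg, Real.exp_add]
                ring)
      have hcalc : (∫ lam in s₀..T, (m * Real.exp (-ϱ * (T - s₀)) / β)
            * (c lam * Real.exp (-(∫ τ in s₀..lam, c τ))))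
          = (m * Real.exp (-ϱ * (T - s₀)) / β) * (1 - Real.exp (-(∫ τ in s₀..T, c τ))) := by
        rw [intervalIntegral.integral_const_mul, myaux_ftc_exp hcc s₀ T]
      rw [← hcalc]
      exact hmono
    -- combine and contradict
    have hkey := key s₀ hs₀
    rw [hφs₀] at hkey
    set A : ℝ := Real.exp (-(∫ τ in s₀..T, c τ)) with hAdef
    set E : ℝ := Real.exp (-ϱ * (T - s₀)) with hEdef
    have hA0 : 0 < A := Real.exp_pos _
    have hA1 : A ≤ 1 := by
      rw [hAdef, Real.exp_le_one_iff, neg_nonpos]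
      exact intervalIntegral.integral_nonneg hs₀.2 fun x _ => (hcpos x).le
    have hE0 : 0 < E := Real.exp_pos _
    have hE1 : E ≤ 1 := by
      rw [hEdef, Real.exp_le_one_iff]
      nlinarith [hs₀.2]
    have hcomb : g0 * A + (m * E / β) * (1 - A) ≤ m * E := by
      have h := add_le_add hterm1 hterm2
      rw [← hkey] at h
      exact h
    have h1a : (0:ℝ) ≤ 1 - A := by linarith
    have h1b : m * E ≤ m * E / β := by
      rw [le_div_iff₀ hβ0]
      nlinarith [mul_pos hmpos hE0]
    have h1 : m * E * (1 - A) ≤ m * E / β * (1 - A) :=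
      mul_le_mul_of_nonneg_right h1b h1a
    nlinarith [mul_nonneg (mul_nonneg hmpos.le hA0.le) (by linarith : (0:ℝ) ≤ 1 - E),
      mul_pos (by linarith : (0:ℝ) < g0 - m) hA0]
  refine ⟨part1, ?_⟩
  -- Part 2: upper bound
  intro s hs
  set δ : ℝ := Real.exp (-ϱ * T) * g0 with hδdef
  have hδpos : 0 < δ := mul_pos (Real.exp_pos _) hg0
  have hδle : ∀ lam ∈ Icc s T, δ ≤ φ lam := by
    intro lam hlam
    have hlam0T : lam ∈ Icc (0 : ℝ) T := ⟨hs.1.trans hlam.1, hlam.2⟩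
    refine le_trans ?_ (part1 lam hlam0T)
    apply mul_le_mul_of_nonneg_right _ hg0.le
    apply Real.exp_le_exp.mpr
    nlinarith [hlam0T.1]
  have hq0 : β / (β - 1) ≤ 0 := (div_neg_of_pos_of_neg hβ0 hβ1').le
  rw [key s hs]
  have hCnonneg : ∀ lam ∈ Icc s T, 0 ≤ ∫ τ in s..lam, c τ := by
    intro lam hlam
    exact intervalIntegral.integral_nonneg hlam.1 fun x _ => (hcpos x).le
  -- term 1
  have hterm1 : Real.exp ((∫ τ in s..T, k2 s τ) - ∫ τ in s..T, c τ) * g s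
      ≤ Real.exp (∫ τ in s..T, k s τ) * g s := by
    apply mul_le_mul_of_nonneg_right _ (hgpos s hs).le
    rw [hKcongr s hs T ⟨hs.2, le_refl T⟩]
    apply Real.exp_le_exp.mpr
    have := hCnonneg T ⟨hs.2, le_refl T⟩
    linarith
  -- term 2
  have hgoal2 : (∫ lam in s..T,
        Real.exp ((∫ τ in s..lam, k2 s τ) - ∫ τ in s..lam, c τ)
          * v2 s lam * φ lam ^ (β / (β - 1)))
      ≤ δ ^ (β / (β - 1)) * ∫ lam in s..T, Real.exp (∫ τ in s..lam, k s τ) * v s lam := by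
    have hcongr2 : (∫ lam in s..T, Real.exp (∫ τ in s..lam, k s τ) * v s lam)
        = ∫ lam in s..T, Real.exp (∫ τ in s..lam, k2 s τ) * v2 s lam := by
      apply intervalIntegral.integral_congr
      intro lam hlam
      rw [uIcc_of_le hs.2] at hlam
      show Real.exp (∫ τ in s..lam, k s τ) * v s lam
          = Real.exp (∫ τ in s..lam, k2 s τ) * v2 s lam
      rw [hKcongr s hs lam hlam, hv2eq s lam hlam]
    rw [hcongr2, ← intervalIntegral.integral_const_mul]
    have hUint : IntervalIntegrable (fun lam =>
        Real.exp ((∫ τ in s..lam, k2 s τ) - ∫ τ in s..lam, c τ)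
          * v2 s lam * φ lam ^ (β / (β - 1))) MeasureTheory.volume s T := by
      apply ContinuousOn.intervalIntegrable
      rw [uIcc_of_le hs.2]
      exact hUcont s hs
    apply intervalIntegral.integral_mono_on hs.2 hUint
      ((continuous_const.mul ((Real.continuous_exp.comp
        (myaux_cont_primitive (hk2c s hs) s)).mul (hv2c s hs))).intervalIntegrable s T)
    intro lam hlam
    have hlam0T : lam ∈ Icc (0 : ℝ) T := ⟨hs.1.trans hlam.1, hlam.2⟩
    have hφq : φ lam ^ (β / (β - 1)) ≤ δ ^ (β / (β - 1)) :=
      Real.rpow_le_rpow_of_nonpos hδpos (hδle lam hlam) hq0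
    have hexple : Real.exp ((∫ τ in s..lam, k2 s τ) - ∫ τ in s..lam, c τ)
        ≤ Real.exp (∫ τ in s..lam, k2 s τ) := by
      apply Real.exp_le_exp.mpr
      have := hCnonneg lam hlam
      linarith
    calc Real.exp ((∫ τ in s..lam, k2 s τ) - ∫ τ in s..lam, c τ)
          * v2 s lam * φ lam ^ (β / (β - 1))
        ≤ Real.exp (∫ τ in s..lam, k2 s τ) * v2 s lam * δ ^ (β / (β - 1)) := by
          apply mul_le_mul
          · exact mul_le_mul_of_nonneg_right hexple (hv2pos s hs lam).le
          · exact hφq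
          · exact Real.rpow_nonneg (hφpos lam hlam0T).le _
          · exact mul_nonneg (Real.exp_pos _).le (hv2pos s hs lam).le
      _ = δ ^ (β / (β - 1)) * (Real.exp (∫ τ in s..lam, k2 s τ) * v2 s lam) := by ring
  calc Real.exp ((∫ τ in s..T, k2 s τ) - ∫ τ in s..T, c τ) * g s
        + ∫ lam in s..T,
            Real.exp ((∫ τ in s..lam, k2 s τ) - ∫ τ in s..lam, c τ)
              * v2 s lam * φ lam ^ (β / (β - 1))
      ≤ Real.exp (∫ τ in s..T, k s τ) * g s
        + δ ^ (β / (β - 1)) * ∫ lam in s..T, Real.exp (∫ τ in s..lam, k s τ) * v s lam :=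
        add_le_add hterm1 hgoal2
    _ = _ := by rw [hδdef]

end
end
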